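/- For every ε > 0 and every a, b ∈ ℂ, one has |a·ln((ε+|a|)²) − b·ln((ε+|b|)²)| ≤ 2(1 + max{ln(1/ε), |ln(ε + max{|a|,|b|})|})·|a − b|, provided ε + max{|a|, |b|} ≥ ε. -/

import Mathlib

private lemma key_11 (ε : ℝ) (hε : 0 < ε) (a b : ℂ)
    (hab : ‖a‖ ≤ ‖b‖) :
    ‖a * (Real.log ((ε + ‖a‖)^2) : ℂ)
        - b * (Real.log ((ε + ‖b‖)^2) : ℂ)‖ ≤
      2 * (1 + |Real.log (ε + ‖b‖)|) * ‖a - b‖ := by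
  set x := ‖a‖ with hx
  set y := ‖b‖ with hy
  have hx0 : 0 ≤ x := norm_nonneg a
  have hεx : 0 < ε + x := by linarith
  have hεy : 0 < ε + y := by linarith
  have hLa : Real.log ((ε + x)^2) = 2 * Real.log (ε + x) := by
    rw [Real.log_pow]; push_cast; ring
  have hLb : Real.log ((ε + y)^2) = 2 * Real.log (ε + y) := by
    rw [Real.log_pow]; push_cast; ring
  have hsplit : a * (Real.log ((ε + x)^2) : ℂ) - b * (Real.log ((ε + y)^2) : ℂ)
      = (a - b) * (Real.log ((ε + y)^2) : ℂ)
        + a * ((Real.log ((ε + x)^2) : ℂ) - (Real.log ((ε + y)^2) : ℂ)) := by ring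
  rw [hsplit]
  have h1 : ‖(a - b) * (Real.log ((ε + y)^2) : ℂ)‖
      ≤ 2 * |Real.log (ε + y)| * ‖a - b‖ := by
    rw [norm_mul, Complex.norm_real, Real.norm_eq_abs, hLb]
    rw [abs_mul]
    simp [abs_of_nonneg]
    ring_nf
    nlinarith [abs_nonneg (Real.log (ε+y)), norm_nonneg (a-b)]
  have hlogdiff : Real.log (ε + y) - Real.log (ε + x) ≤ (y - x) / (ε + x) := by
    have := Real.log_le_sub_one_of_pos (x := (ε + y) / (ε + x)) (by positivity)
    rw [Real.log_div (ne_of_gt hεy) (ne_of_gt hεx)] at this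
    have h2 : (ε + y) / (ε + x) - 1 = (y - x) / (ε + x) := by
      field_simp; ring
    linarith [this, h2 ▸ this]
  have hlog_mono : Real.log (ε + x) ≤ Real.log (ε + y) :=
    Real.log_le_log hεx (by linarith)
  have hyx : y - x ≤ ‖a - b‖ := by
    have h4 : ‖b‖ - ‖a‖ ≤ ‖b - a‖ := by
      simpa using norm_sub_norm_le b a
    have hsymm : ‖b - a‖ = ‖a - b‖ := by
      rw [← norm_neg, neg_sub]
    rw [hsymm] at h4
    exact h4
  have h2 : ‖a * ((Real.log ((ε + x)^2) : ℂ) - (Real.log ((ε + y)^2) : ℂ))‖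
      ≤ 2 * ‖a - b‖ := by
    rw [norm_mul]
    have : ‖(Real.log ((ε + x)^2) : ℂ) - (Real.log ((ε + y)^2) : ℂ)‖
        = 2 * (Real.log (ε + y) - Real.log (ε + x)) := by
      rw [← Complex.ofReal_sub, Complex.norm_real, Real.norm_eq_abs, hLa, hLb]
      rw [abs_of_nonpos (by linarith)]
      ring
    rw [this]
    have hkey : x * (Real.log (ε + y) - Real.log (ε + x)) ≤ y - x := by
      have h3 : x * ((y - x) / (ε + x)) ≤ y - x := by
        rw [div_eq_mul_inv]
        have hxε : x * (ε + x)⁻¹ ≤ 1 := by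
          rw [mul_inv_le_iff₀ hεx]; linarith
        calc x * ((y - x) * (ε + x)⁻¹) = (x * (ε + x)⁻¹) * (y - x) := by ring
          _ ≤ 1 * (y - x) := by
              apply mul_le_mul_of_nonneg_right hxε; linarith [hab]
          _ = y - x := by ring
      nlinarith [mul_le_mul_of_nonneg_left hlogdiff hx0]
    calc x * (2 * (Real.log (ε + y) - Real.log (ε + x)))
        = 2 * (x * (Real.log (ε + y) - Real.log (ε + x))) := by ring
      _ ≤ 2 * (y - x) := by linarith
      _ ≤ 2 * ‖a - b‖ := by linarith
  calc ‖_‖ ≤ _ + _ := norm_add_le _ _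
    _ ≤ 2 * |Real.log (ε + y)| * ‖a - b‖ + 2 * ‖a - b‖ := by
        linarith
    _ = 2 * (1 + |Real.log (ε + y)|) * ‖a - b‖ := by ring

theorem stmt_11 (ε : ℝ) (hε : 0 < ε) (a b : ℂ)
    (h : ε + max (‖a‖) (‖b‖) ≥ ε) :
    ‖a * (Real.log ((ε + ‖a‖)^2) : ℂ)
        - b * (Real.log ((ε + ‖b‖)^2) : ℂ)‖ ≤
      2 * (1 + max (Real.log (1/ε))
            |Real.log (ε + max (‖a‖) (‖b‖))|)
        * ‖a - b‖ := by
  rcases le_total (‖a‖) (‖b‖) with hab | hba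
  · have hmax : max (‖a‖) (‖b‖) = ‖b‖ := max_eq_right hab
    rw [hmax]
    calc _ ≤ 2 * (1 + |Real.log (ε + ‖b‖)|) * ‖a - b‖ :=
            key_11 ε hε a b hab
      _ ≤ _ := by
          apply mul_le_mul_of_nonneg_right _ (norm_nonneg _)
          have := le_max_right (Real.log (1/ε)) |Real.log (ε + ‖b‖)|
          linarith
  · have hmax : max (‖a‖) (‖b‖) = ‖a‖ := max_eq_left hba
    rw [hmax]
    have hswap : ‖a * (Real.log ((ε + ‖a‖)^2) : ℂ)
        - b * (Real.log ((ε + ‖b‖)^2) : ℂ)‖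
        = ‖b * (Real.log ((ε + ‖b‖)^2) : ℂ)
        - a * (Real.log ((ε + ‖a‖)^2) : ℂ)‖ := by
      rw [← norm_neg, neg_sub]
    have hsub : ‖b - a‖ = ‖a - b‖ := by
      rw [← norm_neg, neg_sub]
    rw [hswap]
    calc _ ≤ 2 * (1 + |Real.log (ε + ‖a‖)|) * ‖b - a‖ :=
            key_11 ε hε b a hba
      _ ≤ _ := by
          rw [hsub]
          apply mul_le_mul_of_nonneg_right _ (norm_nonneg _)
          have := le_max_right (Real.log (1/ε)) |Real.log (ε + ‖a‖)|
          linarith
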